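/- Let A be a finite nonempty set, A_all ⊆ A nonempty, and for w > 1 define scores S_s^w as in the soft-constraint model: S_s^w(a) = w^n · S_h(a) for a ∈ A_all and S_s^w(a) = w^k(a) · S_h(a) for a ∉ A_all, where k(a) ≤ n − 1 and S_h : A → ℝ is positive. Then as w → ∞, Pr_s^w(a) = S_s^w(a)/∑_{a'} S_s^w(a') converges to Pr_h(a) = S_h(a)·1[a∈A_all]/∑_{a'∈A_all} S_h(a') for every a ∈ A. -/

import Mathlib

open Finset Filter Topology

theorem soft_posterior_limit
    {α : Type*} [DecidableEq α] (A Aall : Finset α)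
    (hA : A.Nonempty) (hAall : Aall.Nonempty) (hsub : Aall ⊆ A)
    (Sh : α → ℝ) (hSh : ∀ a ∈ A, 0 < Sh a)
    (n : ℕ) (hn : 1 ≤ n) (k : α → ℕ)
    (hk : ∀ a ∈ A, a ∉ Aall → k a ≤ n - 1) :
    ∀ a ∈ A,
      Tendsto
        (fun w : ℝ =>
          (if a ∈ Aall then w ^ n * Sh a else w ^ (k a) * Sh a) /
            ∑ a' ∈ A, (if a' ∈ Aall then w ^ n * Sh a' else w ^ (k a') * Sh a'))
        atTop
        (𝓝 (if a ∈ Aall then Sh a / ∑ a' ∈ Aall, Sh a' else 0)) := by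
  intro a ha
  set S : ℝ := ∑ a' ∈ Aall, Sh a' with hS
  have hSpos : 0 < S := Finset.sum_pos (fun x hx => hSh x (hsub hx)) hAall
  have hterm : ∀ a' ∈ A,
      Tendsto (fun w : ℝ =>
          (if a' ∈ Aall then w ^ n * Sh a' else w ^ (k a') * Sh a') / w ^ n)
        atTop (𝓝 (if a' ∈ Aall then Sh a' else 0)) := by
    intro a' ha'
    by_cases h : a' ∈ Aall
    · simp only [h, if_true]
      apply Tendsto.congr' (f₁ := fun _ => Sh a') _ tendsto_const_nhds
      filter_upwards [eventually_gt_atTop (0 : ℝ)] with w hw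
      have hwn : (w : ℝ) ^ n ≠ 0 := by positivity
      field_simp
    · simp only [h, if_false]
      have hkn : k a' < n := lt_of_le_of_lt (hk a' ha' h) (Nat.sub_lt hn Nat.one_pos)
      have hlim : Tendsto (fun w : ℝ => Sh a' / w ^ (n - k a')) atTop (𝓝 0) := by
        have h1 : Tendsto (fun w : ℝ => (w ^ (n - k a'))⁻¹) atTop (𝓝 0) :=
          (tendsto_pow_atTop (by omega)).inv_tendsto_atTop
        have := h1.const_mul (Sh a')
        simpa [div_eq_mul_inv] using this
      apply hlim.congr'
      filter_upwards [eventually_gt_atTop (0 : ℝ)] with w hw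
      rw [div_eq_div_iff (by positivity) (by positivity)]
      rw [mul_comm (w ^ k a') (Sh a'), mul_assoc, ← pow_add]
      congr 2
      omega
  have hnum := hterm a ha
  have hden : Tendsto (fun w : ℝ =>
      (∑ a' ∈ A, (if a' ∈ Aall then w ^ n * Sh a' else w ^ (k a') * Sh a')) / w ^ n)
      atTop (𝓝 S) := by
    have hsum : Tendsto (fun w : ℝ =>
        ∑ a' ∈ A, (if a' ∈ Aall then w ^ n * Sh a' else w ^ (k a') * Sh a') / w ^ n)
        atTop (𝓝 (∑ a' ∈ A, if a' ∈ Aall then Sh a' else 0)) :=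
      tendsto_finset_sum _ (fun a' ha' => hterm a' ha')
    have heq : (∑ a' ∈ A, if a' ∈ Aall then Sh a' else 0) = S := by
      rw [Finset.sum_ite_mem, Finset.inter_eq_right.mpr hsub]
    rw [heq] at hsum
    apply hsum.congr
    intro w
    rw [Finset.sum_div]
  have hmain := hnum.div hden (ne_of_gt hSpos)
  have hval : (if a ∈ Aall then Sh a else 0) / S = (if a ∈ Aall then Sh a / S else 0) := by
    split <;> simp
  rw [hval] at hmain
  apply hmain.congr'
  filter_upwards [eventually_gt_atTop (0 : ℝ)] with w hw
  have hwn : (w : ℝ) ^ n ≠ 0 := by positivity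
  have hdpos : 0 < ∑ a' ∈ A, (if a' ∈ Aall then w ^ n * Sh a' else w ^ (k a') * Sh a') := by
    refine Finset.sum_pos (fun x hx => ?_) hA
    have := hSh x hx
    split <;> positivity
  simp only [Pi.div_apply]
  field_simp
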